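/- With the glued space (Z, d_Z) as above (built from a compact limit (X, d_∞) and monotone sequence d_j ≤ d_∞ with uniform errors ε_j ↓ 0, h_j = ε_j/2), the metric space (Z, d_Z) is compact. -/

import Mathlib

/-- The distance on the sheet `Z_j = X × [0, h_j]` (with `h_j = ε j / 2`). -/
noncomputable def sheetD {X : Type*} [MetricSpace X]
    (d : ℕ → X → X → ℝ) (ε : ℕ → ℝ) (j : ℕ) (z w : X × ℝ) : ℝ :=
  min (dist z.1 w.1 + |z.2 - w.2|)
    ((ε j / 2 - z.2) + (ε j / 2 - w.2) + d j z.1 w.1)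

/-- The glued space `Z`: the common spine `X × {0}` together with the open parts
`X × (0, h_j]` of the sheets. -/
def Glued (X : Type*) (ε : ℕ → ℝ) : Type _ :=
  X ⊕ (Σ j : ℕ, X × {t : ℝ // t ∈ Set.Ioc 0 (ε j / 2)})

/-- The glued distance `d_Z` on `Z`. -/
noncomputable def gluedD {X : Type*} [MetricSpace X]
    (d : ℕ → X → X → ℝ) (ε : ℕ → ℝ) : Glued X ε → Glued X ε → ℝ := fun z w =>
  match z, w with
  | .inl x, .inl y => dist x y
  | .inl x, .inr ⟨k, y, t⟩ => sheetD d ε k (x, 0) (y, (t : ℝ))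
  | .inr ⟨k, y, t⟩, .inl x => sheetD d ε k (y, (t : ℝ)) (x, 0)
  | .inr ⟨j, x, s⟩, .inr ⟨k, y, t⟩ =>
      if j = k then sheetD d ε j (x, (s : ℝ)) (y, (t : ℝ))
      else ⨅ p : X, (sheetD d ε j (x, (s : ℝ)) (p, 0) + sheetD d ε k (p, 0) (y, (t : ℝ)))

section Aux

variable {X : Type*} [MetricSpace X] (d : ℕ → X → X → ℝ) (ε : ℕ → ℝ)

/-- the X-component -/
def gproj : Glued X ε → X := fun z =>
  match z with
  | .inl x => x
  | .inr ⟨_, y, _⟩ => y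

/-- the height -/
def gheight : Glued X ε → ℝ := fun z =>
  match z with
  | .inl _ => 0
  | .inr ⟨_, _, t⟩ => (t : ℝ)

/-- the sheet tag -/
def gtag : Glued X ε → Option ℕ := fun z =>
  match z with
  | .inl _ => none
  | .inr ⟨k, _, _⟩ => some k

lemma gtag_none {w : Glued X ε} (h : gtag ε w = none) : ∃ x, w = Sum.inl x := by
  match w with
  | .inl x => exact ⟨x, rfl⟩
  | .inr ⟨k, y, t⟩ => simp [gtag] at h

lemma gtag_some {w : Glued X ε} {k : ℕ} (h : gtag ε w = some k) :
    ∃ y t, w = Sum.inr ⟨k, y, t⟩ := by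
  match w with
  | .inl x => simp [gtag] at h
  | .inr ⟨j, y, t⟩ =>
      simp only [gtag, Option.some.injEq] at h
      subst h
      exact ⟨y, t, rfl⟩

lemma sheetD_le (j : ℕ) (z w : X × ℝ) :
    sheetD d ε j z w ≤ dist z.1 w.1 + |z.2 - w.2| := min_le_left _ _

lemma sheetD_nonneg (hnonneg : ∀ j x y, 0 ≤ d j x y) (j : ℕ) {z w : X × ℝ}
    (hz : z.2 ≤ ε j / 2) (hw : w.2 ≤ ε j / 2) : 0 ≤ sheetD d ε j z w :=
  le_min (add_nonneg dist_nonneg (abs_nonneg _))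
    (by have := hnonneg j z.1 w.1; linarith)

lemma gheight_nonneg (w : Glued X ε) : 0 ≤ gheight ε w := by
  match w with
  | .inl x => exact le_refl 0
  | .inr ⟨k, y, t⟩ => exact (t.2.1).le

lemma gluedD_inl_nonneg (hnonneg : ∀ j x y, 0 ≤ d j x y) (hεpos : ∀ j, 0 < ε j)
    (w : Glued X ε) (x : X) : 0 ≤ gluedD d ε w (Sum.inl x) := by
  match w with
  | .inl y => exact dist_nonneg
  | .inr ⟨k, y, t⟩ =>
      show (0:ℝ) ≤ sheetD d ε k (y, (t:ℝ)) (x, 0)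
      exact sheetD_nonneg d ε hnonneg k t.2.2 (by have := hεpos k; simp; linarith)

lemma gluedD_inl_le (w : Glued X ε) (x : X) :
    gluedD d ε w (Sum.inl x) ≤ dist (gproj ε w) x + gheight ε w := by
  match w with
  | .inl y => simp [gluedD, gproj, gheight]
  | .inr ⟨k, y, t⟩ =>
      show sheetD d ε k (y, (t:ℝ)) (x, 0) ≤ dist y x + (t:ℝ)
      have := sheetD_le d ε k (y, (t:ℝ)) (x, 0)
      simpa [abs_of_nonneg t.2.1.le] using this

end Aux

/-- The glued space `(Z, d_Z)` built from a compact limit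
`(X, d_∞)` and a monotone increasing sequence `d_j ≤ d_∞` with uniform errors
`ε_j ↓ 0` is compact (expressed sequentially for the distance `d_Z`). -/
theorem gluedD_compact
    {X : Type*} [MetricSpace X] [CompactSpace X] [Nonempty X]
    (d : ℕ → X → X → ℝ) (ε : ℕ → ℝ)
    (hnonneg : ∀ j x y, 0 ≤ d j x y)
    (hself : ∀ j x, d j x x = 0)
    (hdef : ∀ j x y, d j x y = 0 → x = y)
    (hsymm : ∀ j x y, d j x y = d j y x)
    (htri : ∀ j x y z, d j x z ≤ d j x y + d j y z)
    (hmono : ∀ j x y, d j x y ≤ d (j + 1) x y)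
    (hle : ∀ j x y, d j x y ≤ dist x y)
    (herr : ∀ j x y, dist x y - d j x y ≤ ε j)
    (hεpos : ∀ j, 0 < ε j)
    (hεanti : Antitone ε)
    (hε0 : Filter.Tendsto ε Filter.atTop (nhds 0)) :
    ∀ u : ℕ → Glued X ε, ∃ φ : ℕ → ℕ, StrictMono φ ∧
      ∃ z : Glued X ε, Filter.Tendsto (fun n => gluedD d ε (u (φ n)) z)
        Filter.atTop (nhds 0) := by
  intro u
  by_cases hinf : ∃ v : Option ℕ, {n | gtag ε (u n) = v}.Infinite
  · obtain ⟨v, hv⟩ := hinf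
    set p : ℕ → Prop := fun n => gtag ε (u n) = v with hp
    have hφ₀ : StrictMono (Nat.nth p) := Nat.nth_strictMono hv
    have hmem : ∀ n, gtag ε (u (Nat.nth p n)) = v := Nat.nth_mem_of_infinite hv
    match v with
    | none =>
        choose x' hx' using fun n => gtag_none ε (hmem n)
        obtain ⟨x, -, φ₁, hφ₁, hconv⟩ :=
          isCompact_univ.tendsto_subseq (x := x') (fun n => Set.mem_univ _)
        refine ⟨Nat.nth p ∘ φ₁, hφ₀.comp hφ₁, Sum.inl x, ?_⟩
        have heq : (fun n => gluedD d ε (u (Nat.nth p (φ₁ n))) (Sum.inl x))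
            = fun n => dist (x' (φ₁ n)) x := by
          funext n; rw [hx' (φ₁ n)]; rfl
        simp only [Function.comp_apply]
        rw [heq]
        exact tendsto_iff_dist_tendsto_zero.mp hconv
    | some k =>
        choose y t hyt using fun n => gtag_some ε (hmem n)
        have hsub : ∀ n, (y n, (t n : ℝ)) ∈ (Set.univ ×ˢ Set.Icc 0 (ε k / 2)) := by
          intro n
          exact ⟨Set.mem_univ _, (t n).2.1.le, (t n).2.2⟩
        obtain ⟨⟨x, s⟩, hxs, φ₁, hφ₁, hconv⟩ :=
          (isCompact_univ.prod isCompact_Icc).tendsto_subseq hsub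
        have h1 : Filter.Tendsto (fun n => y (φ₁ n)) Filter.atTop (nhds x) :=
          (Continuous.tendsto continuous_fst (x, s)).comp hconv
        have h2 : Filter.Tendsto (fun n => (t (φ₁ n) : ℝ)) Filter.atTop (nhds s) :=
          (Continuous.tendsto continuous_snd (x, s)).comp hconv
        rcases eq_or_lt_of_le hxs.2.1 with hs0 | hs0
        · -- s = 0 : limit on the spine
          refine ⟨Nat.nth p ∘ φ₁, hφ₀.comp hφ₁, Sum.inl x, ?_⟩
          refine squeeze_zero (fun n => gluedD_inl_nonneg d ε hnonneg hεpos _ x)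
            (fun n => gluedD_inl_le d ε _ x) ?_
          have heq : (fun n => dist (gproj ε (u (Nat.nth p (φ₁ n)))) x
              + gheight ε (u (Nat.nth p (φ₁ n))))
              = fun n => dist (y (φ₁ n)) x + (t (φ₁ n) : ℝ) := by
            funext n; rw [hyt (φ₁ n)]; rfl
          simp only [Function.comp_apply]
          rw [heq]
          have hs0' : s = 0 := hs0.symm
          rw [hs0'] at h2
          have := (tendsto_iff_dist_tendsto_zero.mp h1).add h2
          simpa using this
        · -- s > 0 : limit in the sheet k
          refine ⟨Nat.nth p ∘ φ₁, hφ₀.comp hφ₁,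
            Sum.inr ⟨k, x, ⟨s, hs0, hxs.2.2⟩⟩, ?_⟩
          have heq : (fun n => gluedD d ε (u (Nat.nth p (φ₁ n)))
              (Sum.inr ⟨k, x, ⟨s, hs0, hxs.2.2⟩⟩))
              = fun n => sheetD d ε k (y (φ₁ n), (t (φ₁ n) : ℝ)) (x, s) := by
            funext n; rw [hyt (φ₁ n)]; simp [gluedD]
          simp only [Function.comp_apply]
          rw [heq]
          refine squeeze_zero
            (g := fun n => dist (y (φ₁ n)) x + |(t (φ₁ n) : ℝ) - s|)
            (fun n => sheetD_nonneg d ε hnonneg k (t (φ₁ n)).2.2 hxs.2.2)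
            (fun n => sheetD_le d ε k _ _) ?_
          have habs : Filter.Tendsto (fun n => |(t (φ₁ n) : ℝ) - s|)
              Filter.atTop (nhds 0) := by
            have hsub : Filter.Tendsto (fun n => (t (φ₁ n) : ℝ) - s)
                Filter.atTop (nhds (s - s)) := h2.sub tendsto_const_nhds
            simpa [sub_self] using hsub.abs
          have := (tendsto_iff_dist_tendsto_zero.mp h1).add habs
          simpa using this
  · -- all tag fibers are finite: heights tend to 0
    push_neg at hinf
    have ht : Filter.Tendsto (fun n => gheight ε (u n)) Filter.atTop (nhds 0) := by
      rw [Metric.tendsto_atTop]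
      intro δ hδ
      obtain ⟨J, hJ⟩ : ∃ J, ε J < δ :=
        (hε0.eventually_lt_const hδ).exists
      have hfin : {n | ¬ gheight ε (u n) < δ}.Finite := by
        apply Set.Finite.subset
          (Set.Finite.biUnion (Set.finite_Iio J)
            (fun k _ => hinf (some k)))
        intro n hn
        simp only [Set.mem_setOf_eq, not_lt] at hn
        match hw : u n with
        | .inl x =>
            exfalso
            have : gheight ε (u n) = 0 := by rw [hw]; rfl
            rw [this] at hn; exact absurd hn (not_le.mpr hδ)
        | .inr ⟨k, y', t'⟩ =>
            have htag : gtag ε (u n) = some k := by rw [hw]; rfl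
            have hht : gheight ε (u n) = (t' : ℝ) := by rw [hw]; rfl
            have hkJ : k < J := by
              by_contra hk
              push_neg at hk
              have : (t' : ℝ) ≤ ε k / 2 := t'.2.2
              have h3 : ε k ≤ ε J := hεanti hk
              rw [hht] at hn
              linarith
            exact Set.mem_biUnion hkJ htag
      have hev : ∀ᶠ n in Filter.atTop, gheight ε (u n) < δ := by
        rw [← Nat.cofinite_eq_atTop]
        exact Filter.eventually_cofinite.mpr hfin
      obtain ⟨N, hN⟩ := Filter.eventually_atTop.mp hev
      refine ⟨N, fun n hn => ?_⟩
      rw [Real.dist_eq, sub_zero, abs_of_nonneg (gheight_nonneg ε _)]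
      exact hN n hn
    obtain ⟨x, -, φ, hφ, hconv⟩ :=
      isCompact_univ.tendsto_subseq (x := fun n => gproj ε (u n))
        (fun n => Set.mem_univ _)
    refine ⟨φ, hφ, Sum.inl x, ?_⟩
    refine squeeze_zero (fun n => gluedD_inl_nonneg d ε hnonneg hεpos _ x)
      (fun n => gluedD_inl_le d ε _ x) ?_
    have := (tendsto_iff_dist_tendsto_zero.mp hconv).add
      (ht.comp hφ.tendsto_atTop)
    simpa using this
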